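/- If u ∼ N(μ, Σ) in ℝⁿ and ‖μ‖ + sqrt(Q_{χ²_n}(1-ε)) · sqrt(λ_max(Σ)) ≤ u_max, then P(‖u‖ ≤ u_max) ≥ 1 - ε. -/

import Mathlib

open Matrix MeasureTheory

/-- The standard Gaussian measure on `ℝⁿ` (product of standard real Gaussians). -/
noncomputable def stdGaussian (n : ℕ) : Measure (Fin n → ℝ) :=
  Measure.pi fun _ => ProbabilityTheory.gaussianReal 0 1

/-- Euclidean norm on `Fin n → ℝ`. -/
noncomputable def euclNorm {n : ℕ} (v : Fin n → ℝ) : ℝ :=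
  Real.sqrt (∑ i, (v i) ^ 2)

/-- The `p`-quantile of a real random variable `X` under measure `P`. -/
noncomputable def quantile {Ω : Type*} [MeasurableSpace Ω] (P : Measure Ω)
    (X : Ω → ℝ) (p : ℝ) : ℝ :=
  sInf {t : ℝ | p ≤ (P {ω | X ω ≤ t}).toReal}

/-- The `p`-quantile of the chi-squared distribution with `n` degrees of freedom. -/
noncomputable def chiSqQuantile (n : ℕ) (p : ℝ) : ℝ :=
  quantile (stdGaussian n) (fun x => ∑ i, (x i) ^ 2) p

/-- The largest eigenvalue of a real symmetric matrix. -/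
noncomputable def lambdaMax {n : ℕ} (A : Matrix (Fin n) (Fin n) ℝ)
    (hA : A.IsHermitian) : ℝ := ⨆ i, hA.eigenvalues i

/- ### Auxiliary lemmas -/

lemma lambdaMax_nonneg_aux {n : ℕ} {A : Matrix (Fin n) (Fin n) ℝ} (hA : A.PosSemidef) :
    0 ≤ ⨆ i, hA.1.eigenvalues i := by
  rcases isEmpty_or_nonempty (Fin n) with h | h
  · simp [ciSup_of_empty]
  · obtain ⟨i⟩ := h
    exact le_trans (hA.eigenvalues_nonneg i) (le_ciSup (Set.finite_range _).bddAbove i)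

/-- Rayleigh quotient bound for real symmetric matrices. -/
lemma rayleigh_aux {n : ℕ} {M : Matrix (Fin n) (Fin n) ℝ} (hM : M.IsHermitian) (x : Fin n → ℝ) :
    x ⬝ᵥ (M *ᵥ x) ≤ (⨆ i, hM.eigenvalues i) * (x ⬝ᵥ x) := by
  rcases isEmpty_or_nonempty (Fin n) with h | h
  · simp [dotProduct]
  set L := ⨆ i, hM.eigenvalues i with hL
  have hle : ∀ i, hM.eigenvalues i ≤ L := fun i => le_ciSup (Set.finite_range _).bddAbove i
  set U : Matrix (Fin n) (Fin n) ℝ := (hM.eigenvectorUnitary : Matrix (Fin n) (Fin n) ℝ)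
  have hUU : U * star U = 1 := (Matrix.mem_unitaryGroup_iff).mp hM.eigenvectorUnitary.2
  have hdiag : (RCLike.ofReal ∘ hM.eigenvalues : Fin n → ℝ) = hM.eigenvalues := by
    funext i; simp
  have hN : L • (1 : Matrix (Fin n) (Fin n) ℝ) - M
      = U * diagonal (fun i => L - hM.eigenvalues i) * Uᴴ := by
    have hst := hM.spectral_theorem
    rw [hdiag, Unitary.conjStarAlgAut_apply] at hst
    change M = U * diagonal hM.eigenvalues * star U at hst
    calc L • (1 : Matrix (Fin n) (Fin n) ℝ) - M
        = U * (L • 1) * star U - U * diagonal hM.eigenvalues * star U := by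
          rw [← hst]
          congr 1
          rw [Matrix.mul_smul, Matrix.smul_mul, mul_one, hUU]
      _ = U * diagonal (fun i => L - hM.eigenvalues i) * Uᴴ := by
          rw [← Matrix.star_eq_conjTranspose]
          rw [← Matrix.sub_mul, ← Matrix.mul_sub]
          congr 2
          ext i j
          rcases eq_or_ne i j with rfl | hij
          · simp [Matrix.one_apply, Matrix.diagonal_apply]
          · simp [Matrix.one_apply_ne hij, Matrix.diagonal_apply_ne _ hij]
  have hpsd : (L • (1 : Matrix (Fin n) (Fin n) ℝ) - M).PosSemidef := by
    rw [hN]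
    exact (Matrix.PosSemidef.diagonal
      (fun i => sub_nonneg.mpr (hle i))).mul_mul_conjTranspose_same U
  have h0 := hpsd.dotProduct_mulVec_nonneg x
  simp only [star_trivial, sub_mulVec, smul_mulVec, one_mulVec, dotProduct_sub,
    dotProduct_smul, smul_eq_mul] at h0
  linarith

/-- The value of the cdf at the quantile is at least `p`, for nonnegative random variables. -/
lemma quantile_cdf_ge_aux {Ω : Type*} [MeasurableSpace Ω] (P : Measure Ω)
    [IsProbabilityMeasure P] (X : Ω → ℝ) (hX : Measurable X) (hX0 : ∀ ω, 0 ≤ X ω)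
    (p : ℝ) (hp0 : 0 < p) (hp1 : p < 1) :
    p ≤ (P {ω | X ω ≤ quantile P X p}).toReal := by
  set F : ℝ → ℝ := fun t => (P {ω | X ω ≤ t}).toReal with hF
  set S : Set ℝ := {t : ℝ | p ≤ F t} with hS
  have hFmono : Monotone F := by
    intro a b hab
    exact ENNReal.toReal_mono (measure_ne_top _ _)
      (measure_mono fun ω hω => le_trans hω hab)
  have hne : S.Nonempty := by
    have hU : ⋃ k : ℕ, {ω | X ω ≤ (k : ℝ)} = Set.univ := by
      ext ω; simp only [Set.mem_iUnion, Set.mem_univ, iff_true, Set.mem_setOf_eq]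
      obtain ⟨k, hk⟩ := exists_nat_ge (X ω)
      exact ⟨k, hk⟩
    have hmono : Monotone fun k : ℕ => {ω | X ω ≤ (k : ℝ)} := by
      intro a b hab ω hω
      simp only [Set.mem_setOf_eq] at hω ⊢
      exact le_trans hω (Nat.cast_le.mpr hab)
    have h1 : Filter.Tendsto (fun k : ℕ => P {ω | X ω ≤ (k : ℝ)}) Filter.atTop
        (nhds (P Set.univ)) := by
      have := tendsto_measure_iUnion_atTop (μ := P) hmono
      rwa [hU] at this
    have h2 : Filter.Tendsto (fun k : ℕ => F (k : ℝ)) Filter.atTop (nhds 1) := by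
      have := (ENNReal.tendsto_toReal (by simp : P Set.univ ≠ ⊤)).comp h1
      rw [measure_univ, ENNReal.toReal_one] at this
      exact this
    have h3 : ∀ᶠ k : ℕ in Filter.atTop, p ≤ F (k : ℝ) := h2.eventually_const_le hp1
    obtain ⟨k, hk⟩ := h3.exists
    exact ⟨(k : ℝ), hk⟩
  set q := quantile P X p with hq
  have hqeq : q = sInf S := rfl
  have hqS : ∀ δ : ℝ, 0 < δ → q + δ ∈ S := by
    intro δ hδ
    have hlt : sInf S < q + δ := by rw [← hqeq]; linarith
    obtain ⟨t, htS, htlt⟩ := exists_lt_of_csInf_lt hne hlt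
    exact le_trans htS (hFmono htlt.le)
  have hInter : {ω | X ω ≤ q} = ⋂ k : ℕ, {ω | X ω ≤ q + 1 / (k + 1)} := by
    ext ω
    simp only [Set.mem_setOf_eq, Set.mem_iInter]
    constructor
    · intro h k
      have : (0:ℝ) < 1 / (k + 1) := by positivity
      linarith
    · intro h
      by_contra hc
      push_neg at hc
      obtain ⟨k, hk⟩ := exists_nat_one_div_lt (sub_pos.mpr hc)
      have := h k
      linarith
  have hanti : Antitone fun k : ℕ => {ω | X ω ≤ q + 1 / (k + 1)} := by
    intro a b hab ω hω
    simp only [Set.mem_setOf_eq] at hω ⊢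
    have : (1:ℝ) / (b + 1) ≤ 1 / (a + 1) := by
      apply one_div_le_one_div_of_le
      · positivity
      · exact_mod_cast by omega
    linarith
  have hmeas : ∀ k : ℕ, NullMeasurableSet {ω | X ω ≤ q + 1 / (k + 1)} P :=
    fun k => (measurableSet_le hX measurable_const).nullMeasurableSet
  have htend := tendsto_measure_iInter_atTop (μ := P) hmeas hanti
    ⟨0, measure_ne_top _ _⟩
  rw [← hInter] at htend
  have htend2 : Filter.Tendsto (fun k : ℕ => F (q + 1 / (k + 1))) Filter.atTop
      (nhds (P {ω | X ω ≤ q}).toReal) :=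
    (ENNReal.tendsto_toReal (measure_ne_top _ _)).comp htend
  exact ge_of_tendsto' htend2 (fun k => hqS (1 / (k + 1)) (by positivity))

lemma euclNorm_eq_norm {n : ℕ} (v : Fin n → ℝ) :
    euclNorm v = ‖(WithLp.equiv 2 (Fin n → ℝ)).symm v‖ := by
  rw [EuclideanSpace.norm_eq]
  unfold euclNorm
  congr 1
  refine Finset.sum_congr rfl fun i _ => ?_
  simp [Real.norm_eq_abs, sq_abs]

lemma euclNorm_triangle {n : ℕ} (a b : Fin n → ℝ) :
    euclNorm (a + b) ≤ euclNorm a + euclNorm b := by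
  rw [euclNorm_eq_norm, euclNorm_eq_norm, euclNorm_eq_norm]
  have : (WithLp.equiv 2 (Fin n → ℝ)).symm (a + b)
      = (WithLp.equiv 2 (Fin n → ℝ)).symm a + (WithLp.equiv 2 (Fin n → ℝ)).symm b := rfl
  rw [this]
  exact norm_add_le _ _

lemma euclNorm_sq {n : ℕ} (v : Fin n → ℝ) (h : 0 ≤ (0:ℝ)) : euclNorm v ^ 2 = ∑ i, v i ^ 2 := by
  unfold euclNorm
  rw [Real.sq_sqrt (Finset.sum_nonneg fun i _ => sq_nonneg _)]

/-- The operator-norm-type bound: `‖A w‖ ≤ √(λmax (A Aᵀ)) ‖w‖`. -/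
lemma mulVec_euclNorm_le {n : ℕ} (A : Matrix (Fin n) (Fin n) ℝ)
    (hpsd : (A * Aᵀ).PosSemidef) (w : Fin n → ℝ) :
    euclNorm (A *ᵥ w) ≤ Real.sqrt (⨆ i, hpsd.1.eigenvalues i) * euclNorm w := by
  set L := ⨆ i, hpsd.1.eigenvalues i with hLdef
  have hL0 : 0 ≤ L := lambdaMax_nonneg_aux hpsd
  set y := A *ᵥ w with hy
  have hyy : y ⬝ᵥ y = ∑ i, y i ^ 2 := by
    simp [dotProduct, sq]
  have hww : w ⬝ᵥ w = ∑ i, w i ^ 2 := by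
    simp [dotProduct, sq]
  have hww0 : 0 ≤ w ⬝ᵥ w := by rw [hww]; positivity
  have hyy0 : 0 ≤ y ⬝ᵥ y := by rw [hyy]; positivity
  -- key inequality (y⬝y)^2 ≤ L * (y⬝y) * (w⬝w)
  have hkey : (y ⬝ᵥ y) ^ 2 ≤ L * (y ⬝ᵥ y) * (w ⬝ᵥ w) := by
    have h1 : y ⬝ᵥ y = (Aᵀ *ᵥ y) ⬝ᵥ w := by
      rw [hy, dotProduct_mulVec, mulVec_transpose]
    have h2 : ((Aᵀ *ᵥ y) ⬝ᵥ w) ^ 2 ≤ ((Aᵀ *ᵥ y) ⬝ᵥ (Aᵀ *ᵥ y)) * (w ⬝ᵥ w) := by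
      simpa [dotProduct, sq] using
        Finset.sum_mul_sq_le_sq_mul_sq Finset.univ (Aᵀ *ᵥ y) w
    have h3 : (Aᵀ *ᵥ y) ⬝ᵥ (Aᵀ *ᵥ y) = y ⬝ᵥ ((A * Aᵀ) *ᵥ y) := by
      rw [dotProduct_mulVec, vecMul_transpose, mulVec_mulVec, dotProduct_comm]
    have h4 : y ⬝ᵥ ((A * Aᵀ) *ᵥ y) ≤ L * (y ⬝ᵥ y) := rayleigh_aux hpsd.1 y
    calc (y ⬝ᵥ y) ^ 2 = ((Aᵀ *ᵥ y) ⬝ᵥ w) ^ 2 := by rw [h1]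
      _ ≤ ((Aᵀ *ᵥ y) ⬝ᵥ (Aᵀ *ᵥ y)) * (w ⬝ᵥ w) := h2
      _ = (y ⬝ᵥ ((A * Aᵀ) *ᵥ y)) * (w ⬝ᵥ w) := by rw [h3]
      _ ≤ (L * (y ⬝ᵥ y)) * (w ⬝ᵥ w) := by
          exact mul_le_mul_of_nonneg_right h4 hww0
      _ = L * (y ⬝ᵥ y) * (w ⬝ᵥ w) := by ring
  have hmain : y ⬝ᵥ y ≤ L * (w ⬝ᵥ w) := by
    rcases eq_or_lt_of_le hyy0 with h0 | h0
    · rw [← h0]; positivity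
    · have := hkey
      nlinarith
  have hnorm : euclNorm y ≤ Real.sqrt (L * (w ⬝ᵥ w)) := by
    unfold euclNorm
    apply Real.sqrt_le_sqrt
    rw [← hyy]
    exact hmain.trans_eq (by rw [hww])
  calc euclNorm y ≤ Real.sqrt (L * (w ⬝ᵥ w)) := hnorm
    _ = Real.sqrt L * Real.sqrt (w ⬝ᵥ w) := Real.sqrt_mul hL0 _
    _ = Real.sqrt L * euclNorm w := by rw [hww]; rfl

instance stdGaussian_isProbabilityMeasure (n : ℕ) : IsProbabilityMeasure (stdGaussian n) := by
  unfold stdGaussian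
  infer_instance

/-- If `u ∼ N(μ, Σ)` in `ℝⁿ` (realized as `u = μ + Σ^{1/2} w` for standard Gaussian `w`)
and `‖μ‖ + √(Q_{χ²ₙ}(1-ε)) · √(λ_max(Σ)) ≤ u_max`, then `P(‖u‖ ≤ u_max) ≥ 1 - ε`. -/
theorem gaussian_norm_chance_constraint {n : ℕ}
    (μ : Fin n → ℝ) (Sig Sighalf : Matrix (Fin n) (Fin n) ℝ)
    (hSig : Sig.PosSemidef) (hhalf : Sighalf * Sighalfᵀ = Sig)
    (ε : ℝ) (hε : ε ∈ Set.Ioo (0 : ℝ) 1) (umax : ℝ)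
    (hbound : euclNorm μ + Real.sqrt (chiSqQuantile n (1 - ε)) *
        Real.sqrt (lambdaMax Sig hSig.1) ≤ umax) :
    1 - ε ≤ ((stdGaussian n) {w | euclNorm (μ + Sighalf.mulVec w) ≤ umax}).toReal := by
  subst hhalf
  obtain ⟨hε0, hε1⟩ := hε
  set P := stdGaussian n
  set X : (Fin n → ℝ) → ℝ := fun x => ∑ i, x i ^ 2 with hX
  have hXmeas : Measurable X := by
    apply Finset.measurable_sum
    intro i _
    exact ((measurable_pi_apply i).pow_const 2)
  have hX0 : ∀ x, 0 ≤ X x := fun x => Finset.sum_nonneg fun i _ => sq_nonneg _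
  set Q := chiSqQuantile n (1 - ε) with hQ
  have hquant : 1 - ε ≤ (P {w | X w ≤ Q}).toReal := by
    have := quantile_cdf_ge_aux P X hXmeas hX0 (1 - ε) (by linarith) (by linarith)
    exact this
  have hsubset : {w | X w ≤ Q} ⊆ {w | euclNorm (μ + Sighalf *ᵥ w) ≤ umax} := by
    intro w hw
    simp only [Set.mem_setOf_eq] at hw ⊢
    have hQ0 : 0 ≤ Q := le_trans (hX0 w) hw
    have hwnorm : euclNorm w ≤ Real.sqrt Q := by
      unfold euclNorm
      exact Real.sqrt_le_sqrt hw
    have hL0 : 0 ≤ Real.sqrt (lambdaMax (Sighalf * Sighalfᵀ) hSig.1) := Real.sqrt_nonneg _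
    have hbd := mulVec_euclNorm_le Sighalf hSig w
    have hlam : (⨆ i, hSig.1.eigenvalues i) = lambdaMax (Sighalf * Sighalfᵀ) hSig.1 := rfl
    rw [hlam] at hbd
    calc euclNorm (μ + Sighalf *ᵥ w)
        ≤ euclNorm μ + euclNorm (Sighalf *ᵥ w) := euclNorm_triangle _ _
      _ ≤ euclNorm μ + Real.sqrt (lambdaMax (Sighalf * Sighalfᵀ) hSig.1) * euclNorm w := by
          linarith
      _ ≤ euclNorm μ + Real.sqrt (lambdaMax (Sighalf * Sighalfᵀ) hSig.1) * Real.sqrt Q := by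
          have := mul_le_mul_of_nonneg_left hwnorm hL0
          linarith
      _ ≤ umax := by rw [mul_comm] at hbound ⊢; linarith [hbound]
  calc (1 : ℝ) - ε ≤ (P {w | X w ≤ Q}).toReal := hquant
    _ ≤ (P {w | euclNorm (μ + Sighalf *ᵥ w) ≤ umax}).toReal :=
        ENNReal.toReal_mono (measure_ne_top _ _) (measure_mono hsubset)
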